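/- If a matrix A ∈ M_{k×m} has no identically zero row or column and the number of zero entries of A is strictly less than max{k,m}/min{k,m}, then A has total support. -/

import Mathlib

open Matrix BigOperators

/-- A (possibly rectangular, as long as the index types have the same cardinality)
matrix has support if some generalized permutation diagonal has nonzero product. -/
def HasSupport {R C α : Type*} [Fintype R] [Fintype C] [CommMonoidWithZero α]
    (A : Matrix R C α) : Prop :=
  ∃ σ : R ≃ C, ∏ i, A i (σ i) ≠ 0

/-- Total support: every nonzero entry lies on a nonzero generalized permutation diagonal. -/
def HasTotalSupport {R C α : Type*} [Fintype R] [Fintype C] [CommMonoidWithZero α]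
    (A : Matrix R C α) : Prop :=
  ∀ p q, A p q ≠ 0 → ∃ σ : R ≃ C, σ p = q ∧ ∏ i, A i (σ i) ≠ 0

/-- The Kronecker product `A ⊗ 1_{m×k}` of `A ∈ M_{k×m}` with the all-ones matrix `1_{m×k}`. -/
def kronOnes {R C α : Type*} (A : Matrix R C α) : Matrix (R × C) (C × R) α :=
  Matrix.of fun p q => A p.1 q.1

/-- A rectangular matrix has support if `A ⊗ 1_{m×k}` has support. -/
def RectSupport {R C α : Type*} [Fintype R] [Fintype C] [CommMonoidWithZero α]
    (A : Matrix R C α) : Prop :=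
  HasSupport (kronOnes A)

/-- A rectangular matrix has total support if `A ⊗ 1_{m×k}` has total support. -/
def RectTotalSupport {R C α : Type*} [Fintype R] [Fintype C] [CommMonoidWithZero α]
    (A : Matrix R C α) : Prop :=
  HasTotalSupport (kronOnes A)

open Finset in
private lemma main_le {k m : ℕ} (A : Matrix (Fin k) (Fin m) ℝ)
    (hcol : ∀ j, ∃ i, A i j ≠ 0)
    (hZ : k * (Finset.univ.filter (fun p : Fin k × Fin m => A p.1 p.2 = 0)).card < m)
    : RectTotalSupport A := by
  classical
  intro p q hpq
  have hpq' : A p.1 q.1 ≠ 0 := hpq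
  have hk : 0 < k := p.1.pos
  have hm : 0 < m := q.1.pos
  set Z := (Finset.univ.filter (fun p : Fin k × Fin m => A p.1 p.2 = 0)).card with hZdef
  set N : Fin k × Fin m → Finset (Fin m × Fin k) :=
    (fun x => Finset.univ.filter (fun y => A x.1 y.1 ≠ 0)) with hN
  set t : Fin k × Fin m → Finset (Fin m × Fin k) :=
    (fun x => if x = p then {q} else (N x).erase q) with ht
  have key : ∀ s : Finset (Fin k × Fin m), s.Nonempty → p ∉ s →
      s.card + 1 ≤ (s.biUnion N).card := by
    intro s hne hps
    set I := s.image Prod.fst with hI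
    set C := I.biUnion (fun i => Finset.univ.filter (fun c => A i c ≠ 0)) with hC
    have hbU : s.biUnion N = C ×ˢ Finset.univ := by
      ext y
      simp only [mem_biUnion, hN, mem_filter, mem_univ, true_and, mem_product,
        hC, hI, mem_image, and_true]
      constructor
      · rintro ⟨x, hx, h0⟩; exact ⟨x.1, ⟨x, hx, rfl⟩, h0⟩
      · rintro ⟨i, ⟨x, hx, rfl⟩, h0⟩; exact ⟨x, hx, h0⟩
    have hcard : (s.biUnion N).card = C.card * k := by
      rw [hbU, card_product, card_univ, Fintype.card_fin]
    have hIcard : I.card ≤ k := le_trans (card_le_card (subset_univ I)) (by simp)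
    have hI1 : 1 ≤ I.card := card_pos.2 (hne.image _)
    have hscard : s.card ≤ I.card * m := by
      calc s.card ≤ (I ×ˢ (univ : Finset (Fin m))).card := by
            apply card_le_card
            intro x hx
            exact mem_product.2 ⟨mem_image.2 ⟨x, hx, rfl⟩, mem_univ _⟩
        _ = I.card * m := by rw [card_product, card_univ, Fintype.card_fin]
    rcases eq_or_lt_of_le hIcard with hIk | hIk
    · have hIuniv : I = Finset.univ := I.eq_univ_of_card (by simpa using hIk)
      have hCuniv : C = Finset.univ := by
        apply Finset.eq_univ_of_forall
        intro c
        obtain ⟨i, hi⟩ := hcol c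
        exact mem_biUnion.2 ⟨i, hIuniv ▸ mem_univ i, mem_filter.2 ⟨mem_univ _, hi⟩⟩
      have hs' : s.card ≤ k * m - 1 := by
        have hsub : s ⊆ Finset.univ.erase p :=
          fun x hx => mem_erase.2 ⟨fun h => hps (h ▸ hx), mem_univ x⟩
        calc s.card ≤ (Finset.univ.erase p).card := card_le_card hsub
          _ = k * m - 1 := by
            rw [card_erase_of_mem (mem_univ p), card_univ]
            simp [Fintype.card_prod]
      have hkm1 : 1 ≤ k * m := Nat.mul_pos hk hm
      rw [hcard, hCuniv, card_univ, Fintype.card_fin]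
      have hcomm : m * k = k * m := Nat.mul_comm m k
      omega
    · have hsub : I ×ˢ Cᶜ ⊆ Finset.univ.filter (fun p : Fin k × Fin m => A p.1 p.2 = 0) := by
        rintro ⟨i, c⟩ hx
        rw [mem_product] at hx
        refine mem_filter.2 ⟨mem_univ _, ?_⟩
        by_contra h0
        exact (mem_compl.1 hx.2) (mem_biUnion.2 ⟨i, hx.1, mem_filter.2 ⟨mem_univ _, h0⟩⟩)
      have hZ1 : I.card * (m - C.card) ≤ Z := by
        calc I.card * (m - C.card) = (I ×ˢ Cᶜ).card := by
              rw [card_product, card_compl, Fintype.card_fin]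
          _ ≤ Z := card_le_card hsub
      have hCm : C.card ≤ m := le_trans (card_le_card (subset_univ C)) (by simp)
      rw [hcard]
      set a := I.card with ha
      set c := C.card with hc
      have h2 : k * (a * (m - c)) < m := lt_of_le_of_lt (Nat.mul_le_mul_left k hZ1) hZ
      set d := m - c with hd
      have hcd : c + d = m := by omega
      have hd1 : d ≤ a * d := Nat.le_mul_of_pos_left d hI1
      have hk2 : 2 ≤ k := by omega
      have h3' : 2 * (a * d) ≤ k * (a * d) := Nat.mul_le_mul_right _ hk2
      have h3 : a * d + d ≤ k * (a * d) := by omega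
      have had : a * d + 1 ≤ c := by omega
      have hgoal : a * m + 1 ≤ c * k := by
        calc a * m + 1 = a * c + (a * d + 1) := by rw [← hcd]; ring
          _ ≤ a * c + c := Nat.add_le_add_left had _
          _ = c * (a + 1) := by ring
          _ ≤ c * k := Nat.mul_le_mul_left c hIk
      omega
  have hall : ∀ s : Finset (Fin k × Fin m), s.card ≤ (s.biUnion t).card := by
    have L : ∀ s' : Finset (Fin k × Fin m), p ∉ s' → s'.card ≤ (s'.biUnion t).card := by
      intro s' hps'
      rcases s'.eq_empty_or_nonempty with rfl | hne
      · simp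
      · have h1 := key s' hne hps'
        have h2 : (s'.biUnion N).erase q ⊆ s'.biUnion t := by
          intro y hy
          rw [mem_erase] at hy
          obtain ⟨x, hx, hxy⟩ := mem_biUnion.1 hy.2
          refine mem_biUnion.2 ⟨x, hx, ?_⟩
          have hxp : x ≠ p := fun h => hps' (h ▸ hx)
          simp only [ht, if_neg hxp]
          exact mem_erase.2 ⟨hy.1, hxy⟩
        have h3 : (s'.biUnion N).card - 1 ≤ ((s'.biUnion N).erase q).card :=
          Finset.pred_card_le_card_erase
        have h4 := card_le_card h2
        omega
    intro s
    by_cases hps : p ∈ s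
    · have hqB : q ∉ (s.erase p).biUnion t := by
        intro hq
        obtain ⟨x, hx, hxq⟩ := mem_biUnion.1 hq
        have hxp : x ≠ p := (mem_erase.1 hx).1
        simp only [ht, if_neg hxp] at hxq
        exact (mem_erase.1 hxq).1 rfl
      have hst : s.biUnion t = insert q ((s.erase p).biUnion t) := by
        conv_lhs => rw [← insert_erase hps]
        rw [biUnion_insert]
        have : t p = {q} := by simp [ht]
        rw [this, ← Finset.insert_eq]
      have h5 := L (s.erase p) (notMem_erase p s)
      have h6 : (s.erase p).card = s.card - 1 := card_erase_of_mem hps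
      rw [hst, card_insert_of_notMem hqB]
      omega
    · exact L s hps
  obtain ⟨f, hfinj, hfmem⟩ := (Finset.all_card_le_biUnion_card_iff_existsInjective' t).1 hall
  have hbij : Function.Bijective f :=
    (Fintype.bijective_iff_injective_and_card f).2
      ⟨hfinj, by simp [Fintype.card_prod, Nat.mul_comm]⟩
  have hfp : f p = q := by
    have := hfmem p
    simp only [ht, if_pos rfl, mem_singleton] at this
    exact this
  refine ⟨Equiv.ofBijective f hbij, hfp, ?_⟩
  rw [Finset.prod_ne_zero_iff]
  intro x _
  show kronOnes A x (f x) ≠ 0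
  by_cases hxp : x = p
  · subst hxp
    rw [hfp]
    exact hpq'
  · have hx := hfmem x
    simp only [ht, if_neg hxp, hN, mem_erase, mem_filter] at hx
    exact hx.2.2

private lemma rect_transpose {k m : ℕ} (A : Matrix (Fin k) (Fin m) ℝ)
    (h : RectTotalSupport Aᵀ) : RectTotalSupport A := by
  intro p q hpq
  have hpq' : kronOnes Aᵀ q p ≠ 0 := hpq
  obtain ⟨σ, hσq, hσprod⟩ := h q p hpq'
  refine ⟨σ.symm, by rw [← hσq, Equiv.symm_apply_apply], ?_⟩
  have hre := Equiv.prod_comp σ (fun x => kronOnes A x (σ.symm x))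
  rw [← hre]
  simpa [kronOnes, Matrix.transpose_apply] using hσprod

/-- If `A ∈ M_{k×m}` has no identically zero row or column and fewer than
`max{k,m}/min{k,m}` zero entries, then `A` has total support. -/
theorem rectTotalSupport_of_no_zero_lines {k m : ℕ} (A : Matrix (Fin k) (Fin m) ℝ)
    (hrow : ∀ i, ∃ j, A i j ≠ 0) (hcol : ∀ j, ∃ i, A i j ≠ 0)
    (hz : ({p : Fin k × Fin m | A p.1 p.2 = 0}.ncard : ℝ) <
      (max k m : ℝ) / (min k m : ℝ)) :
    RectTotalSupport A := by
  classical
  rcases Nat.eq_zero_or_pos k with rfl | hk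
  · intro p q hpq; exact absurd p.1.2 (Nat.not_lt_zero _)
  rcases Nat.eq_zero_or_pos m with rfl | hm
  · intro p q hpq; exact absurd q.1.2 (Nat.not_lt_zero _)
  have hncard : {p : Fin k × Fin m | A p.1 p.2 = 0}.ncard
      = (Finset.univ.filter (fun p : Fin k × Fin m => A p.1 p.2 = 0)).card := by
    rw [← Set.ncard_coe_finset]
    congr 1
    ext x
    simp
  have hminpos : (0 : ℝ) < min (k : ℝ) (m : ℝ) := by
    rcases min_cases (k:ℝ) (m:ℝ) with ⟨h1, _⟩ | ⟨h1, _⟩ <;> rw [h1] <;>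
      [exact_mod_cast hk; exact_mod_cast hm]
  rw [lt_div_iff₀ hminpos] at hz
  by_cases hkm : k ≤ m
  · have hmax : max (k:ℝ) (m:ℝ) = (m:ℝ) := max_eq_right (by exact_mod_cast hkm)
    have hmin : min (k:ℝ) (m:ℝ) = (k:ℝ) := min_eq_left (by exact_mod_cast hkm)
    rw [hmax, hmin, hncard] at hz
    have hz' : k * (Finset.univ.filter (fun p : Fin k × Fin m => A p.1 p.2 = 0)).card < m := by
      exact_mod_cast (by linarith : ((k : ℝ)) *
        ((Finset.univ.filter (fun p : Fin k × Fin m => A p.1 p.2 = 0)).card : ℝ) < (m:ℝ))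
    exact main_le A hcol hz'
  · push_neg at hkm
    have hmax : max (k:ℝ) (m:ℝ) = (k:ℝ) := max_eq_left (by exact_mod_cast hkm.le)
    have hmin : min (k:ℝ) (m:ℝ) = (m:ℝ) := min_eq_right (by exact_mod_cast hkm.le)
    rw [hmax, hmin, hncard] at hz
    apply rect_transpose
    have hcardT : (Finset.univ.filter (fun p : Fin m × Fin k => Aᵀ p.1 p.2 = 0)).card
        = (Finset.univ.filter (fun p : Fin k × Fin m => A p.1 p.2 = 0)).card := by
      apply Finset.card_bij (fun p _ => Prod.swap p)
      · rintro ⟨j, i⟩ hp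
        simp only [Finset.mem_filter, Finset.mem_univ, true_and, Matrix.transpose_apply] at hp ⊢
        exact Finset.mem_filter.1 hp |>.2
      · rintro ⟨j, i⟩ - ⟨j', i'⟩ - h
        exact Prod.swap_injective h
      · rintro ⟨i, j⟩ hp
        refine ⟨(j, i), ?_, rfl⟩
        simp only [Finset.mem_filter, Finset.mem_univ, true_and, Matrix.transpose_apply] at hp ⊢
        exact Finset.mem_filter.2 ⟨Finset.mem_univ _, hp⟩
    have hz' : m * (Finset.univ.filter (fun p : Fin m × Fin k => Aᵀ p.1 p.2 = 0)).card < k := by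
      rw [hcardT]
      exact_mod_cast (by linarith : ((m : ℝ)) *
        ((Finset.univ.filter (fun p : Fin k × Fin m => A p.1 p.2 = 0)).card : ℝ) < (k:ℝ))
    exact main_le Aᵀ (fun j => hrow j) hz'
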